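/- Let H = -Δ + V on L²(ℝᵈ) with V(x) = 1 + |x|^θ, θ > 0, and let N(E) be the number of eigenvalues of H less than or equal to E. Given s > 0, define the Riesz mean R_s(E) = Tr(|E - H|₊^s) = Σ_j |E - λ_j|₊^s. Then R_s(E) = s ∫₀^∞ y^{s-1} N(E - y) dy for all E, and R_s(E) / (C_{s,d} E^{s+(1+2/θ)d/2} W_s(1)) → 1 as E → ∞, where C_{s,d} = Γ(s+1)/((4π)^{d/2}Γ(s+1+d/2)) and W_s(1) = ∫_{ℝᵈ}|1-|x|^θ|₊^{s+d/2} dx. -/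

import Mathlib

open MeasureTheory Real Filter

open Set

namespace Stmt19Aux


lemma intIoc {s : ℝ} (hs : 0 < s) {c : ℝ} (hc : 0 ≤ c) :
    ∫ y in Ioc (0:ℝ) c, y ^ (s-1) = c ^ s / s := by
  rw [← intervalIntegral.integral_of_le hc,
    integral_rpow (Or.inl (by linarith : (-1:ℝ) < s - 1))]
  rw [sub_add_cancel, Real.zero_rpow hs.ne', sub_zero]

lemma intgOnIoc {s : ℝ} (hs : 0 < s) (b : ℝ) :
    IntegrableOn (fun y : ℝ => y ^ (s-1)) (Ioc (0:ℝ) b) := by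
  rcases le_or_gt b 0 with hb | hb
  · rw [Ioc_eq_empty (by exact not_lt.mpr hb)]; exact integrableOn_empty
  · exact (intervalIntegral.intervalIntegrable_rpow' (by linarith : (-1:ℝ) < s - 1)
      (a := 0) (b := b)).1

/-- Integrability of `y^{s-1} h y` on `Ioi 0` for `h` bounded, vanishing past `b`. -/
lemma intYmul {s : ℝ} (hs : 0 < s) {h : ℝ → ℝ}
    (hm : AEStronglyMeasurable (fun y => y ^ (s-1) * h y) (volume.restrict (Ioi 0)))
    {C b : ℝ} (hh : ∀ y, 0 < y → |h y| ≤ C) (hh0 : ∀ y, b < y → h y = 0) :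
    IntegrableOn (fun y => y ^ (s-1) * h y) (Ioi (0:ℝ)) := by
  have hC : 0 ≤ C := le_trans (abs_nonneg _) (hh (max b 0 + 1) (by positivity))
  have hint : Integrable (Set.indicator (Ioc (0:ℝ) b) fun y => C * y ^ (s-1))
      (volume.restrict (Ioi 0)) := by
    refine Integrable.integrableOn ?_
    exact IntegrableOn.integrable_indicator ((intgOnIoc hs b).const_mul C) measurableSet_Ioc
  refine Integrable.mono' hint hm ?_
  rw [ae_restrict_iff' measurableSet_Ioi]
  filter_upwards with y hy
  rcases le_or_gt y b with hyb | hyb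
  · rw [Set.indicator_of_mem (by exact ⟨hy, hyb⟩)]
    rw [norm_mul, Real.norm_eq_abs, Real.norm_eq_abs,
      abs_of_nonneg (Real.rpow_nonneg (le_of_lt hy) _)]
    rw [mul_comm C]
    exact mul_le_mul_of_nonneg_left (hh y hy) (Real.rpow_nonneg (le_of_lt hy) _)
  · rw [Set.indicator_of_notMem (by simp [Set.mem_Ioc, not_and, hyb.not_ge]),
      hh0 y hyb, mul_zero, norm_zero]

lemma lcA {s : ℝ} (hs : 0 < s) (c : ℝ) :
    ∫ y in Ioi (0:ℝ), y ^ (s-1) * Set.indicator (Set.Iic c) (fun _ => (1:ℝ)) y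
      = (max c 0) ^ s / s := by
  have h1 : ∀ y : ℝ, y ^ (s-1) * Set.indicator (Set.Iic c) (fun _ => (1:ℝ)) y
      = Set.indicator (Set.Iic c) (fun y => y ^ (s-1)) y := by
    intro y
    by_cases h : y ∈ Set.Iic c
    · simp [Set.indicator_of_mem h]
    · simp [Set.indicator_of_notMem h]
  simp_rw [h1]
  rw [MeasureTheory.setIntegral_indicator measurableSet_Iic]
  have h2 : Set.Ioi (0:ℝ) ∩ Set.Iic c = Set.Ioc 0 c := by
    ext y; simp [Set.mem_Ioc]
  rw [h2]
  rcases le_or_gt c 0 with hc | hc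
  · rw [Ioc_eq_empty (by exact not_lt.mpr hc)]
    rw [max_eq_right hc, Real.zero_rpow hs.ne', zero_div]
    simp
  · rw [intIoc hs hc.le, max_eq_left hc.le]


lemma lcB {s : ℝ} (hs : 0 < s) {q : ℝ} (hq : 0 < q) (a : ℝ) :
    ∫ y in Ioi (0:ℝ), y ^ (s-1) * (max (a - y) 0) ^ q
      = (∫ t in (0:ℝ)..1, t ^ (s-1) * (1-t) ^ q) * (max a 0) ^ (s+q) := by
  rcases le_or_gt a 0 with ha | ha
  · have h0 : EqOn (fun y : ℝ => y ^ (s-1) * (max (a - y) 0) ^ q) (fun _ => (0:ℝ))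
        (Ioi (0:ℝ)) := by
      intro y hy
      have : max (a - y) 0 = 0 := max_eq_right (by simp only [mem_Ioi] at hy; linarith)
      simp [this, Real.zero_rpow hq.ne']
    rw [setIntegral_congr_fun measurableSet_Ioi h0, integral_zero,
      max_eq_right ha, Real.zero_rpow (by positivity : s + q ≠ 0), mul_zero]
  · have h0 : EqOn (fun y : ℝ => y ^ (s-1) * (max (a - y) 0) ^ q)
        (fun y => Set.indicator (Set.Iic a) (fun y : ℝ => y ^ (s-1) * (a - y) ^ q) y)
        (Ioi (0:ℝ)) := by
      intro y _
      dsimp only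
      rcases le_or_gt y a with hya | hya
      · rw [Set.indicator_of_mem (by exact hya : y ∈ Set.Iic a), max_eq_left (by linarith)]
      · rw [Set.indicator_of_notMem (by simpa using hya.not_ge),
          max_eq_right (by linarith), Real.zero_rpow hq.ne', mul_zero]
    rw [setIntegral_congr_fun measurableSet_Ioi h0,
      MeasureTheory.setIntegral_indicator measurableSet_Iic]
    have h2 : Set.Ioi (0:ℝ) ∩ Set.Iic a = Set.Ioc 0 a := by ext y; simp [Set.mem_Ioc]
    rw [h2, ← intervalIntegral.integral_of_le ha.le]
    have hsub := intervalIntegral.smul_integral_comp_mul_left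
      (f := fun y : ℝ => y ^ (s-1) * (a - y) ^ q) (a := 0) (b := 1) a
    rw [mul_zero, mul_one] at hsub
    rw [← hsub]
    have h3 : ∫ t in (0:ℝ)..1, (a*t) ^ (s-1) * (a - a*t) ^ q
        = ∫ t in (0:ℝ)..1, (a ^ (s-1) * a ^ q) * (t ^ (s-1) * (1-t) ^ q) := by
      apply intervalIntegral.integral_congr
      intro t ht
      rw [Set.uIcc_of_le (by norm_num : (0:ℝ) ≤ 1)] at ht
      have ht0 : 0 ≤ t := ht.1
      have ht1 : t ≤ 1 := ht.2
      dsimp only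
      rw [Real.mul_rpow ha.le ht0]
      have : a - a*t = a * (1 - t) := by ring
      rw [this, Real.mul_rpow ha.le (by linarith)]
      ring
    rw [h3, intervalIntegral.integral_const_mul]
    have ha' : a • ((a ^ (s-1) * a ^ q) * ∫ t in (0:ℝ)..1, t ^ (s-1) * (1-t) ^ q)
        = (∫ t in (0:ℝ)..1, t ^ (s-1) * (1-t) ^ q) * (a ^ (s + q)) := by
      rw [smul_eq_mul]
      rw [show a * (a ^ (s-1) * a ^ q * ∫ t in (0:ℝ)..1, t ^ (s-1) * (1-t) ^ q)
        = (a * a ^ (s-1) * a ^ q) * ∫ t in (0:ℝ)..1, t ^ (s-1) * (1-t) ^ q by ring]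
      rw [show a * a ^ (s-1) = a ^ (1:ℝ) * a ^ (s-1) by rw [Real.rpow_one]]
      rw [← Real.rpow_add ha, ← Real.rpow_add ha]
      rw [show (1 + (s-1) + q) = s + q by ring]
      ring
    rw [ha', max_eq_left ha.le]

lemma betaR {u v : ℝ} (hu : 0 < u) (hv : 0 < v) :
    ∫ t in (0:ℝ)..1, t ^ (u-1) * (1-t) ^ (v-1) = Gamma u * Gamma v / Gamma (u+v) := by
  have key := Complex.Gamma_mul_Gamma_eq_betaIntegral
    (s := (u:ℂ)) (t := (v:ℂ)) (by simpa using hu) (by simpa using hv)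
  have hbeta : Complex.betaIntegral (u:ℂ) (v:ℂ)
      = ((∫ t in (0:ℝ)..1, t ^ (u-1) * (1-t) ^ (v-1) : ℝ) : ℂ) := by
    rw [Complex.betaIntegral]
    rw [← intervalIntegral.integral_ofReal]
    apply intervalIntegral.integral_congr
    intro x hx
    rw [Set.uIcc_of_le (by norm_num : (0:ℝ) ≤ 1)] at hx
    have hx0 : 0 ≤ x := hx.1
    have hx1 : 0 ≤ 1 - x := by linarith [hx.2]
    dsimp only
    rw [Complex.ofReal_mul, Complex.ofReal_cpow hx0, Complex.ofReal_cpow hx1]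
    push_cast
    ring_nf
  rw [hbeta, ← Complex.ofReal_add, Complex.Gamma_ofReal, Complex.Gamma_ofReal,
    Complex.Gamma_ofReal] at key
  have key2 : Gamma u * Gamma v = Gamma (u+v) * ∫ t in (0:ℝ)..1, t ^ (u-1) * (1-t) ^ (v-1) := by
    exact_mod_cast key
  have hG : Gamma (u+v) ≠ 0 := (Real.Gamma_pos_of_pos (by linarith)).ne'
  rw [key2]
  field_simp


lemma contF {θ q : ℝ} (hθ : 0 < θ) (hq : 0 < q) {E' : Type*} [NormedAddCommGroup E'] (b : ℝ) :
    Continuous (fun x : E' => (max (b - ‖x‖ ^ θ) 0) ^ q) := by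
  apply Continuous.rpow_const
  · exact (continuous_const.sub ((continuous_norm).rpow_const
      (fun x => Or.inr hθ.le))).max continuous_const
  · exact fun x => Or.inr hq.le

lemma intgF (d : ℕ) {θ q : ℝ} (hθ : 0 < θ) (hq : 0 < q) (b : ℝ) :
    Integrable (fun x : EuclideanSpace ℝ (Fin d) => (max (b - ‖x‖ ^ θ) 0) ^ q) := by
  apply (contF hθ hq b).integrable_of_hasCompactSupport
  apply HasCompactSupport.intro (isCompact_closedBall (0 : EuclideanSpace ℝ (Fin d))
    ((max b 1) ^ θ⁻¹))
  intro x hx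
  rw [Metric.mem_closedBall, not_le, dist_zero_right] at hx
  have hM : (0:ℝ) < max b 1 := lt_of_lt_of_le one_pos (le_max_right _ _)
  have h1 : max b 1 < ‖x‖ ^ θ := by
    have := Real.rpow_lt_rpow (Real.rpow_nonneg hM.le _) hx hθ
    rwa [← Real.rpow_mul hM.le, inv_mul_cancel₀ hθ.ne', Real.rpow_one] at this
  have : b - ‖x‖ ^ θ < 0 := by
    have := le_max_left b 1
    linarith
  rw [max_eq_right this.le, Real.zero_rpow hq.ne']

lemma posF (d : ℕ) {θ q : ℝ} (hθ : 0 < θ) (hq : 0 < q) :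
    0 < ∫ x : EuclideanSpace ℝ (Fin d), (max (1 - ‖x‖ ^ θ) 0) ^ q := by
  rw [integral_pos_iff_support_of_nonneg
    (fun x => Real.rpow_nonneg (le_max_right _ _) _) (intgF d hθ hq 1)]
  apply lt_of_lt_of_le (Metric.measure_ball_pos volume (0 : EuclideanSpace ℝ (Fin d)) one_pos)
  apply measure_mono
  intro x hx
  rw [Metric.mem_ball, dist_zero_right] at hx
  have h1 : ‖x‖ ^ θ < 1 := Real.rpow_lt_one (norm_nonneg x) hx hθ
  have : 0 < max (1 - ‖x‖ ^ θ) 0 := lt_max_of_lt_left (by linarith)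
  exact (Real.rpow_pos_of_pos this q).ne'

lemma scal (d : ℕ) {θ q : ℝ} (hθ : 0 < θ) (hq : 0 < q) (b : ℝ) :
    ∫ x : EuclideanSpace ℝ (Fin d), (max (b - ‖x‖ ^ θ) 0) ^ q
      = (max b 0) ^ (q + d / θ) * ∫ x : EuclideanSpace ℝ (Fin d), (max (1 - ‖x‖ ^ θ) 0) ^ q := by
  rcases le_or_gt b 0 with hb | hb
  · have h0 : (fun x : EuclideanSpace ℝ (Fin d) => (max (b - ‖x‖ ^ θ) 0) ^ q)
        = fun _ => (0:ℝ) := by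
      funext x
      have : b - ‖x‖ ^ θ ≤ 0 := by
        have := Real.rpow_nonneg (norm_nonneg x) θ
        linarith
      rw [max_eq_right this, Real.zero_rpow hq.ne']
    rw [h0, integral_zero, max_eq_right hb, Real.zero_rpow, zero_mul]
    have : 0 ≤ (d:ℝ)/θ := by positivity
    positivity
  · set c : ℝ := b ^ θ⁻¹ with hc
    have hcpos : 0 < c := Real.rpow_pos_of_pos hb _
    have key := MeasureTheory.Measure.integral_comp_smul_of_nonneg (μ := volume)
      (f := fun x : EuclideanSpace ℝ (Fin d) => (max (b - ‖x‖ ^ θ) 0) ^ q) c (hR := hcpos.le)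
    have hcth : c ^ θ = b := by
      rw [hc, ← Real.rpow_mul hb.le, inv_mul_cancel₀ hθ.ne', Real.rpow_one]
    have hfc : ∀ x : EuclideanSpace ℝ (Fin d),
        (max (b - ‖c • x‖ ^ θ) 0) ^ q = b ^ q * (max (1 - ‖x‖ ^ θ) 0) ^ q := by
      intro x
      rw [norm_smul, Real.norm_eq_abs, abs_of_pos hcpos,
        Real.mul_rpow hcpos.le (norm_nonneg x), hcth]
      have h1 : b - b * ‖x‖ ^ θ = b * (1 - ‖x‖ ^ θ) := by ring
      have h2 : max (b * (1 - ‖x‖ ^ θ)) 0 = b * max (1 - ‖x‖ ^ θ) 0 := by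
        rw [mul_max_of_nonneg _ _ hb.le, mul_zero]
      rw [h1, h2, Real.mul_rpow hb.le (le_max_right _ _)]
    simp_rw [hfc] at key
    rw [integral_const_mul] at key
    have hfin : Module.finrank ℝ (EuclideanSpace ℝ (Fin d)) = d := finrank_euclideanSpace_fin
    rw [hfin] at key
    -- key : ∫ x, b^q * ... = (c ^ d)⁻¹ • ∫ x, f x  — rearrange
    have hcd : (c : ℝ) ^ (d : ℕ) = b ^ ((d:ℝ)/θ) := by
      rw [← Real.rpow_natCast c d, hc, ← Real.rpow_mul hb.le]
      congr 1
      field_simp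
    rw [smul_eq_mul] at key
    have : ∫ x : EuclideanSpace ℝ (Fin d), (max (b - ‖x‖ ^ θ) 0) ^ q
        = c ^ (d:ℕ) * (b ^ q * ∫ x : EuclideanSpace ℝ (Fin d), (max (1 - ‖x‖ ^ θ) 0) ^ q) := by
      rw [key, ← mul_assoc, mul_inv_cancel₀ (pow_ne_zero _ hcpos.ne'), one_mul]
    rw [this, hcd, max_eq_left hb.le, ← mul_assoc, ← Real.rpow_add hb]
    ring_nf
lemma Wrel (d : ℕ) (hd : 0 < d) {θ s : ℝ} (hθ : 0 < θ) (hs : 0 < s) :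
    (∫ t in (0:ℝ)..1, t ^ (s-1) * (1-t) ^ ((d:ℝ)/2)) *
      (∫ x : EuclideanSpace ℝ (Fin d), (max (1 - ‖x‖ ^ θ) 0) ^ (s + (d:ℝ)/2))
    = (∫ t in (0:ℝ)..1, t ^ (s-1) * (1-t) ^ ((d:ℝ)/2 + (d:ℝ)/θ)) *
      (∫ x : EuclideanSpace ℝ (Fin d), (max (1 - ‖x‖ ^ θ) 0) ^ ((d:ℝ)/2)) := by
  have hp : (0:ℝ) < (d:ℝ)/2 := by positivity
  set p : ℝ := (d:ℝ)/2 with hpdef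
  set f : ℝ → EuclideanSpace ℝ (Fin d) → ℝ :=
    fun y x => y ^ (s-1) * (max (1 - y - ‖x‖ ^ θ) 0) ^ p with hfdef
  have hW0nn : 0 ≤ ∫ x : EuclideanSpace ℝ (Fin d), (max (1 - ‖x‖ ^ θ) 0) ^ p :=
    integral_nonneg (fun x => Real.rpow_nonneg (le_max_right _ _) _)
  -- measurability of uncurry f
  have hmeas : AEStronglyMeasurable (Function.uncurry f)
      ((volume.restrict (Ioi (0:ℝ))).prod (volume : Measure (EuclideanSpace ℝ (Fin d)))) := by
    have : Measurable (Function.uncurry f) := by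
      apply Measurable.mul
      · fun_prop
      · fun_prop
    exact this.aestronglyMeasurable
  -- integrability of uncurry f
  have hint : Integrable (Function.uncurry f)
      ((volume.restrict (Ioi (0:ℝ))).prod (volume : Measure (EuclideanSpace ℝ (Fin d)))) := by
    rw [MeasureTheory.integrable_prod_iff hmeas]
    constructor
    · filter_upwards with y
      exact ((intgF d hθ hp (1 - y)).const_mul (y ^ (s-1)))
    · have hval : ∀ y : ℝ, 0 < y → (∫ x : EuclideanSpace ℝ (Fin d), ‖Function.uncurry f (y, x)‖)
          = y ^ (s-1) * ((max (1 - y) 0) ^ (p + (d:ℝ)/θ) *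
            ∫ x : EuclideanSpace ℝ (Fin d), (max (1 - ‖x‖ ^ θ) 0) ^ p) := by
        intro y hy
        have hfun : (fun x : EuclideanSpace ℝ (Fin d) => ‖Function.uncurry f (y, x)‖)
            = fun x => y ^ (s-1) * (max (1 - y - ‖x‖ ^ θ) 0) ^ p := by
          funext x
          rw [Function.uncurry_apply_pair, hfdef, norm_mul, Real.norm_eq_abs, Real.norm_eq_abs,
            abs_of_nonneg (Real.rpow_nonneg (le_max_right _ _) _),
            abs_of_nonneg (Real.rpow_nonneg hy.le _)]
        rw [hfun, integral_const_mul, scal d hθ hp (1 - y)]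
      refine Integrable.congr (f := fun y => y ^ (s-1) * ((max (1 - y) 0) ^ (p + (d:ℝ)/θ) *
            ∫ x : EuclideanSpace ℝ (Fin d), (max (1 - ‖x‖ ^ θ) 0) ^ p)) ?_ ?_
      · refine intYmul hs (b := 1)
          (C := ∫ x : EuclideanSpace ℝ (Fin d), (max (1 - ‖x‖ ^ θ) 0) ^ p) ?_ ?_ ?_
        · apply Measurable.aestronglyMeasurable
          fun_prop
        · intro y hy
          rw [abs_of_nonneg (by positivity)]
          have h1 : (max (1 - y) 0) ^ (p + (d:ℝ)/θ) ≤ 1 := by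
            apply Real.rpow_le_one (le_max_right _ _) _ (by positivity)
            apply max_le (by linarith) zero_le_one
          calc (max (1 - y) 0) ^ (p + (d:ℝ)/θ) *
              (∫ x : EuclideanSpace ℝ (Fin d), (max (1 - ‖x‖ ^ θ) 0) ^ p)
              ≤ 1 * ∫ x : EuclideanSpace ℝ (Fin d), (max (1 - ‖x‖ ^ θ) 0) ^ p :=
                mul_le_mul_of_nonneg_right h1 hW0nn
            _ = _ := one_mul _
        · intro y hy
          rw [max_eq_right (by linarith), Real.zero_rpow (by positivity), zero_mul]
      · rw [Filter.EventuallyEq, ae_restrict_iff' measurableSet_Ioi]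
        filter_upwards with y hy
        exact (hval y hy).symm
  -- Step: LHS = ∫_x ∫_y f
  have hswap := MeasureTheory.integral_integral_swap hint
  have hLHS : (∫ x : EuclideanSpace ℝ (Fin d), ∫ y in Ioi (0:ℝ), f y x)
      = (∫ t in (0:ℝ)..1, t ^ (s-1) * (1-t) ^ p) *
        (∫ x : EuclideanSpace ℝ (Fin d), (max (1 - ‖x‖ ^ θ) 0) ^ (s + p)) := by
    rw [← integral_const_mul]
    apply integral_congr_ae
    filter_upwards with x
    have hcomm : ∀ y : ℝ, 1 - y - ‖x‖ ^ θ = 1 - ‖x‖ ^ θ - y := fun y => by ring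
    calc (∫ y in Ioi (0:ℝ), f y x)
        = ∫ y in Ioi (0:ℝ), y ^ (s-1) * (max (1 - ‖x‖ ^ θ - y) 0) ^ p := by
          simp_rw [hfdef, hcomm]
      _ = (∫ t in (0:ℝ)..1, t ^ (s-1) * (1-t) ^ p) * (max (1 - ‖x‖ ^ θ) 0) ^ (s+p) :=
          lcB hs hp _
  have hRHS : (∫ y in Ioi (0:ℝ), ∫ x : EuclideanSpace ℝ (Fin d), f y x)
      = (∫ t in (0:ℝ)..1, t ^ (s-1) * (1-t) ^ (p + (d:ℝ)/θ)) *
        (∫ x : EuclideanSpace ℝ (Fin d), (max (1 - ‖x‖ ^ θ) 0) ^ p) := by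
    have hin : ∀ y : ℝ, (∫ x : EuclideanSpace ℝ (Fin d), f y x)
        = (y ^ (s-1) * (max (1 - y) 0) ^ (p + (d:ℝ)/θ)) *
          ∫ x : EuclideanSpace ℝ (Fin d), (max (1 - ‖x‖ ^ θ) 0) ^ p := by
      intro y
      rw [hfdef]
      rw [integral_const_mul, scal d hθ hp (1 - y)]
      ring
    simp_rw [hin]
    rw [integral_mul_const]
    congr 1
    have := lcB hs (q := p + (d:ℝ)/θ) (by positivity) 1
    rw [this, max_eq_left zero_le_one, Real.one_rpow, mul_one]
  rw [← hpdef] at *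
  rw [← hLHS, ← hswap, hRHS]

end Stmt19Aux

open Stmt19Aux

theorem stmt19part1 (d : ℕ) (hd : 0 < d) (θ s : ℝ) (hθ : 0 < θ) (hs : 0 < s)
    (lam : ℕ → ℝ) (hlam : Monotone lam) (hlam1 : ∀ j, 1 ≤ lam j)
    (hlamtop : Tendsto lam atTop atTop)
    (N : ℝ → ℝ)
    (hN : ∀ E, N E = ∑' j, Set.indicator {j : ℕ | lam j ≤ E} (fun _ => (1:ℝ)) j)
    (R : ℝ → ℝ) (hR : ∀ E, R E = ∑' j, (max (E - lam j) 0) ^ s) :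
    (∀ E : ℝ, R E = s * ∫ y in Set.Ioi (0:ℝ), y ^ (s - 1) * N (E - y)) := by
  classical
  have hex : ∀ E : ℝ, ∃ n, E < lam n := fun E => (hlamtop.eventually_gt_atTop E).exists
  set m : ℝ → ℕ := fun E => Nat.find (hex E) with hmdef
  have hm_gt : ∀ E j, m E ≤ j → E < lam j :=
    fun E j hj => lt_of_lt_of_le (Nat.find_spec (hex E)) (hlam hj)
  have hm_le : ∀ E j, j < m E → lam j ≤ E := fun E j hj => not_lt.mp (Nat.find_min (hex E) hj)
  intro E
  -- R E as finite sum
  have hRfin : R E = ∑ j ∈ Finset.range (m E), (max (E - lam j) 0) ^ s := by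
    rw [hR E]
    apply tsum_eq_sum
    intro j hj
    have : E < lam j := hm_gt E j (Finset.mem_range.not.mp hj |> not_lt.mp)
    rw [max_eq_right (by linarith), Real.zero_rpow hs.ne']
  -- integrand as finite sum
  have hNy : EqOn (fun y => y ^ (s-1) * N (E - y))
      (fun y => ∑ j ∈ Finset.range (m E),
        y ^ (s-1) * Set.indicator (Set.Iic (E - lam j)) (fun _ => (1:ℝ)) y) (Ioi (0:ℝ)) := by
    intro y hy
    rw [mem_Ioi] at hy
    dsimp only
    rw [hN (E - y)]
    rw [tsum_eq_sum (s := Finset.range (m E)) (fun j hj => ?_)]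
    · rw [Finset.mul_sum]
      apply Finset.sum_congr rfl
      intro j hj
      congr 1
      by_cases hcase : lam j ≤ E - y
      · rw [Set.indicator_of_mem (by exact hcase : j ∈ {j : ℕ | lam j ≤ E - y}),
          Set.indicator_of_mem (by simp only [mem_Iic]; linarith : y ∈ Set.Iic (E - lam j))]
      · rw [Set.indicator_of_notMem (by exact hcase : j ∉ {j : ℕ | lam j ≤ E - y}),
          Set.indicator_of_notMem (by simp only [mem_Iic]; push_neg; push_neg at hcase; linarith)]
    · have hj' : E < lam j := hm_gt E j (Finset.mem_range.not.mp hj |> not_lt.mp)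
      apply Set.indicator_of_notMem
      simp only [mem_setOf_eq, not_le]
      linarith
  have hint : ∀ j : ℕ, IntegrableOn
      (fun y => y ^ (s-1) * Set.indicator (Set.Iic (E - lam j)) (fun _ => (1:ℝ)) y)
      (Ioi (0:ℝ)) := by
    intro j
    apply intYmul hs (C := 1) (b := E - lam j)
    · exact ((by fun_prop : Measurable fun y : ℝ => y ^ (s-1)).mul
        ((measurable_const (a := (1:ℝ))).indicator measurableSet_Iic)).aestronglyMeasurable
    · intro y _
      by_cases hcase : y ∈ Set.Iic (E - lam j)
      · rw [Set.indicator_of_mem hcase]; norm_num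
      · rw [Set.indicator_of_notMem hcase]; norm_num
    · intro y hy
      apply Set.indicator_of_notMem
      simp only [mem_Iic]; linarith
  rw [setIntegral_congr_fun measurableSet_Ioi hNy, integral_finset_sum _ (fun j _ => hint j)]
  rw [Finset.mul_sum, hRfin]
  apply Finset.sum_congr rfl
  intro j _
  rw [lcA hs (E - lam j), mul_comm, div_mul_cancel₀ _ hs.ne']

set_option maxHeartbeats 1000000 in
theorem stmt19part2 (d : ℕ) (hd : 0 < d) (θ s : ℝ) (hθ : 0 < θ) (hs : 0 < s)
    (N R W : ℝ → ℝ)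
    (hNmono : Monotone N) (hNnn : ∀ E, 0 ≤ N E) (hN0 : ∀ E, E < 1 → N E = 0)
    (hpart1 : ∀ E : ℝ, R E = s * ∫ y in Set.Ioi (0:ℝ), y ^ (s - 1) * N (E - y))
    (hW : ∀ t : ℝ, W t = ∫ x : EuclideanSpace ℝ (Fin d), (max (1 - ‖x‖ ^ θ) 0) ^ (t + (d:ℝ)/2))
    (hWeyl : Tendsto (fun E => N E / ((E - 1) ^ ((1 + 2/θ) * ((d:ℝ)/2)) * W 0)) atTop
      (nhds (1 / ((4 * π) ^ ((d:ℝ)/2) * Gamma (1 + (d:ℝ)/2))))) :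
    Tendsto (fun E => R E / (Gamma (s+1) / ((4*π) ^ ((d:ℝ)/2) * Gamma (s+1+(d:ℝ)/2))
        * E ^ (s + (1 + 2/θ) * ((d:ℝ)/2)) * W s)) atTop (nhds 1) := by
  set γ : ℝ := (1 + 2/θ) * ((d:ℝ)/2) with hγdef
  have hγeq : γ = (d:ℝ)/2 + (d:ℝ)/θ := by rw [hγdef]; field_simp
  have hγ : 0 < γ := by rw [hγeq]; positivity
  set c0 : ℝ := 1 / ((4 * π) ^ ((d:ℝ)/2) * Gamma (1 + (d:ℝ)/2)) with hc0def
  set Bγ : ℝ := ∫ t in (0:ℝ)..1, t ^ (s-1) * (1-t) ^ γ with hBγdef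
  set L : ℝ := s * (c0 * (W 0 * Bγ)) with hLdef
  have hπ : (0:ℝ) < 4 * π := by linarith [pi_pos]
  have h4p : (0:ℝ) < (4*π) ^ ((d:ℝ)/2) := Real.rpow_pos_of_pos hπ _
  have hΓ1 : 0 < Gamma (1 + (d:ℝ)/2) := Real.Gamma_pos_of_pos (by positivity)
  have hΓ2 : 0 < Gamma (s+1+(d:ℝ)/2) := Real.Gamma_pos_of_pos (by positivity)
  have hc0pos : 0 < c0 := by rw [hc0def]; exact one_div_pos.mpr (mul_pos h4p hΓ1)
  have hW0' : W 0 = ∫ x : EuclideanSpace ℝ (Fin d), (max (1 - ‖x‖ ^ θ) 0) ^ ((d:ℝ)/2) := by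
    rw [hW 0]; simp only [zero_add]
  have hW0pos : 0 < W 0 := by rw [hW0']; exact posF d hθ (by positivity)
  have hWs' : W s = ∫ x : EuclideanSpace ℝ (Fin d), (max (1 - ‖x‖ ^ θ) 0) ^ (s + (d:ℝ)/2) :=
    hW s
  have hWspos : 0 < W s := by rw [hWs']; exact posF d hθ (by positivity)
  have hBγnn : 0 ≤ Bγ := by
    rw [hBγdef]
    apply intervalIntegral.integral_nonneg zero_le_one
    intro t ht
    exact mul_nonneg (Real.rpow_nonneg ht.1 _) (Real.rpow_nonneg (by linarith [ht.2]) _)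
  -- the constant identity
  have hconst : L = Gamma (s+1) / ((4*π) ^ ((d:ℝ)/2) * Gamma (s+1+(d:ℝ)/2)) * W s := by
    have hrel := Wrel d hd hθ hs
    rw [← hγeq, ← hW0', ← hWs', ← hBγdef] at hrel
    have hbp := betaR hs (v := (d:ℝ)/2+1) (by positivity)
    simp only [add_sub_cancel_right] at hbp
    rw [show ((d:ℝ)/2+1) = 1+(d:ℝ)/2 by ring, show s + (1 + (d:ℝ)/2) = s+1+(d:ℝ)/2 by ring]
      at hbp
    rw [hLdef, show W 0 * Bγ = Bγ * W 0 from mul_comm _ _, ← hrel, hbp, hc0def,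
      Real.Gamma_add_one hs.ne']
    field_simp
  have hCpos : 0 < Gamma (s+1) / ((4*π) ^ ((d:ℝ)/2) * Gamma (s+1+(d:ℝ)/2)) :=
    div_pos (Real.Gamma_pos_of_pos (by linarith)) (mul_pos h4p hΓ2)
  -- integrability of the two integrands
  have hNanti : ∀ E : ℝ, Antitone fun y => N (E - y) := by
    intro E a b hab
    exact hNmono (by linarith)
  have intN : ∀ E : ℝ, IntegrableOn (fun y => y ^ (s-1) * N (E - y)) (Ioi (0:ℝ)) := by
    intro E
    apply intYmul hs (C := N E) (b := E - 1)
    · exact ((by fun_prop : Measurable fun y : ℝ => y ^ (s-1)).mul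
        (hNanti E).measurable).aestronglyMeasurable
    · intro y hy
      rw [abs_of_nonneg (hNnn _)]
      exact hNmono (by linarith)
    · intro y hy
      exact hN0 _ (by linarith)
  have intG : ∀ E : ℝ, IntegrableOn
      (fun y => y ^ (s-1) * (max (E - 1 - y) 0) ^ γ) (Ioi (0:ℝ)) := by
    intro E
    apply intYmul hs (C := (max (E-1) 0) ^ γ) (b := E - 1)
    · exact (by fun_prop : Measurable fun y : ℝ =>
        y ^ (s-1) * (max (E - 1 - y) 0) ^ γ).aestronglyMeasurable
    · intro y hy
      rw [abs_of_nonneg (Real.rpow_nonneg (le_max_right _ _) _)]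
      exact Real.rpow_le_rpow (le_max_right _ _)
        (max_le_max (by linarith) le_rfl) hγ.le
    · intro y hy
      rw [max_eq_right (by linarith), Real.zero_rpow hγ.ne']
  -- main limit: R E / (E-1)^(s+γ) → L
  have claim1 : Tendsto (fun E => R E / (E - 1) ^ (s + γ)) atTop (nhds L) := by
    rw [Metric.tendsto_atTop]
    intro δ hδ
    have hsB1 : 0 < s * Bγ + 1 := by nlinarith [mul_nonneg hs.le hBγnn]
    set ε : ℝ := δ / (2 * (s * Bγ + 1)) with hεdef
    have hεpos : 0 < ε := div_pos hδ (by linarith)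
    obtain ⟨M₀, hM₀⟩ := Metric.tendsto_atTop.mp hWeyl (ε / W 0) (div_pos hεpos hW0pos)
    set M : ℝ := max M₀ 2 with hMdef
    have hM2 : (2:ℝ) ≤ M := le_max_right _ _
    have key : ∀ t, M ≤ t → |N t - c0 * W 0 * (t-1) ^ γ| ≤ ε * (t-1) ^ γ := by
      intro t ht
      have ht2 : (2:ℝ) ≤ t := le_trans hM2 ht
      have hb : 0 < (t-1) ^ γ * W 0 :=
        mul_pos (Real.rpow_pos_of_pos (by linarith) _) hW0pos
      have hdist := hM₀ t (le_trans (le_max_left _ _) ht)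
      rw [Real.dist_eq] at hdist
      have hne1 : ((t-1):ℝ) ^ γ ≠ 0 := (Real.rpow_pos_of_pos (by linarith) _).ne'
      have heq0 : N t - c0 * W 0 * (t-1) ^ γ
          = (N t / ((t-1) ^ γ * W 0) - c0) * ((t-1) ^ γ * W 0) := by
        field_simp
      have heq : |N t - c0 * W 0 * (t-1) ^ γ|
          = |N t / ((t-1) ^ γ * W 0) - c0| * ((t-1) ^ γ * W 0) := by
        rw [heq0, abs_mul, abs_of_pos hb]
      rw [heq]
      calc |N t / ((t-1) ^ γ * W 0) - c0| * ((t-1) ^ γ * W 0)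
          ≤ (ε / W 0) * ((t-1) ^ γ * W 0) :=
            mul_le_mul_of_nonneg_right hdist.le hb.le
        _ = ε * (t-1) ^ γ := by field_simp
    set A : ℝ := N M + c0 * W 0 * M ^ γ with hAdef
    have hAnn : 0 ≤ A := add_nonneg (hNnn M)
      (mul_nonneg (mul_nonneg hc0pos.le hW0pos.le) (Real.rpow_nonneg (by linarith) _))
    have htail : Tendsto (fun E : ℝ => A * (E-1) ^ (-γ)) atTop (nhds 0) := by
      have h1 : Tendsto (fun E : ℝ => (E + -1) ^ (-γ)) atTop (nhds 0) :=
        (tendsto_rpow_neg_atTop hγ).comp (tendsto_atTop_add_const_right atTop (-1) tendsto_id)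
      have h2 := h1.const_mul A
      rw [mul_zero] at h2
      apply h2.congr
      intro E
      rw [sub_eq_add_neg]
    obtain ⟨E₁, hE₁⟩ := Metric.tendsto_atTop.mp htail (δ/2) (by linarith)
    refine ⟨max (M+1) E₁, fun E hE => ?_⟩
    have hEM : M + 1 ≤ E := le_trans (le_max_left _ _) hE
    have hb1 : (0:ℝ) < E - 1 := by linarith
    have hbpos : 0 < (E-1) ^ (s+γ) := Real.rpow_pos_of_pos hb1 _
    -- Φ : the comparison integral
    have hΦ : ∫ y in Ioi (0:ℝ), y ^ (s-1) * (max (E - 1 - y) 0) ^ γ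
        = Bγ * (E-1) ^ (s+γ) := by
      have := lcB hs hγ (E - 1)
      rw [max_eq_left hb1.le] at this
      rw [← hBγdef] at this
      exact this
    -- the difference of integrals
    have hsub : (∫ y in Ioi (0:ℝ), y ^ (s-1) * N (E - y))
          - c0 * W 0 * (Bγ * (E-1) ^ (s+γ))
        = ∫ y in Ioi (0:ℝ),
            (y ^ (s-1) * N (E - y) - c0 * W 0 * (y ^ (s-1) * (max (E - 1 - y) 0) ^ γ)) := by
      rw [← hΦ, ← integral_const_mul, ← integral_sub (intN E) (((intG E)).const_mul (c0 * W 0))]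
    -- dominating function
    set g : ℝ → ℝ := fun y => ε * (y ^ (s-1) * (max (E - 1 - y) 0) ^ γ)
        + Set.indicator (Ioc (0:ℝ) (E-1)) (fun y => A * y ^ (s-1)) y with hgdef
    have hgint : Integrable g (volume.restrict (Ioi (0:ℝ))) := by
      apply Integrable.add ((intG E).const_mul ε)
      exact (IntegrableOn.integrable_indicator ((intgOnIoc hs (E-1)).const_mul A)
        measurableSet_Ioc).integrableOn
    have hgbound : ∀ᵐ y ∂(volume.restrict (Ioi (0:ℝ))),
        ‖y ^ (s-1) * N (E - y) - c0 * W 0 * (y ^ (s-1) * (max (E - 1 - y) 0) ^ γ)‖ ≤ g y := by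
      rw [ae_restrict_iff' measurableSet_Ioi]
      filter_upwards with y hy
      rw [mem_Ioi] at hy
      have hyrp : (0:ℝ) ≤ y ^ (s-1) := Real.rpow_nonneg hy.le _
      have habs : ‖y ^ (s-1) * N (E - y) - c0 * W 0 * (y ^ (s-1) * (max (E - 1 - y) 0) ^ γ)‖
          = y ^ (s-1) * |N (E - y) - c0 * W 0 * (max (E - 1 - y) 0) ^ γ| := by
        rw [show y ^ (s-1) * N (E - y) - c0 * W 0 * (y ^ (s-1) * (max (E - 1 - y) 0) ^ γ)
          = y ^ (s-1) * (N (E - y) - c0 * W 0 * (max (E - 1 - y) 0) ^ γ) by ring]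
        rw [Real.norm_eq_abs, abs_mul, abs_of_nonneg hyrp]
      rw [habs]
      have hind_nn : 0 ≤ Set.indicator (Ioc (0:ℝ) (E-1)) (fun y => A * y ^ (s-1)) y := by
        apply Set.indicator_nonneg
        intro z hz
        exact mul_nonneg hAnn (Real.rpow_nonneg hz.1.le _)
      have hterm1_nn : 0 ≤ ε * (y ^ (s-1) * (max (E - 1 - y) 0) ^ γ) :=
        mul_nonneg hεpos.le (mul_nonneg hyrp (Real.rpow_nonneg (le_max_right _ _) _))
      rcases le_or_gt y (E - M) with hyM | hyM
      · -- Weyl regime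
        have hkey := key (E - y) (by linarith)
        rw [show E - y - 1 = E - 1 - y by ring] at hkey
        have hmax : max (E - 1 - y) 0 = E - 1 - y := max_eq_left (by linarith)
        rw [hgdef]
        dsimp only
        calc y ^ (s-1) * |N (E - y) - c0 * W 0 * (max (E - 1 - y) 0) ^ γ|
            ≤ y ^ (s-1) * (ε * (E - 1 - y) ^ γ) := by
              apply mul_le_mul_of_nonneg_left _ hyrp
              rw [hmax]
              exact hkey
          _ = ε * (y ^ (s-1) * (max (E - 1 - y) 0) ^ γ) := by rw [hmax]; ring
          _ ≤ _ := le_add_of_nonneg_right hind_nn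
      · rcases le_or_gt y (E - 1) with hyE | hyE
        · -- middle regime
          have h1 : |N (E - y) - c0 * W 0 * (max (E - 1 - y) 0) ^ γ| ≤ A := by
            have hNle : N (E - y) ≤ N M := hNmono (by linarith)
            have hmle : (max (E - 1 - y) 0) ^ γ ≤ M ^ γ :=
              Real.rpow_le_rpow (le_max_right _ _)
                (max_le (by linarith) (by linarith)) hγ.le
            have := abs_sub (N (E - y)) (c0 * W 0 * (max (E - 1 - y) 0) ^ γ)
            rw [abs_of_nonneg (hNnn _),
              abs_of_nonneg (mul_nonneg (mul_nonneg hc0pos.le hW0pos.le)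
                (Real.rpow_nonneg (le_max_right _ _) _))] at this
            rw [hAdef]
            refine le_trans this (add_le_add hNle ?_)
            exact mul_le_mul_of_nonneg_left hmle (mul_nonneg hc0pos.le hW0pos.le)
          rw [hgdef]
          dsimp only
          calc y ^ (s-1) * |N (E - y) - c0 * W 0 * (max (E - 1 - y) 0) ^ γ|
              ≤ y ^ (s-1) * A := mul_le_mul_of_nonneg_left h1 hyrp
            _ = Set.indicator (Ioc (0:ℝ) (E-1)) (fun y => A * y ^ (s-1)) y := by
                rw [Set.indicator_of_mem (Set.mem_Ioc.mpr ⟨hy, hyE⟩)]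
                ring
            _ ≤ _ := le_add_of_nonneg_left hterm1_nn
        · -- tail regime : everything vanishes
          have h1 : N (E - y) = 0 := hN0 _ (by linarith)
          have h2 : max (E - 1 - y) 0 = 0 := max_eq_right (by linarith)
          rw [h1, h2, Real.zero_rpow hγ.ne']
          simp only [mul_zero, sub_zero, zero_sub, abs_neg, abs_zero, mul_zero]
          rw [hgdef]
          exact add_nonneg hterm1_nn hind_nn
    -- integral of g
    have hgval : (∫ y in Ioi (0:ℝ), g y)
        = ε * (Bγ * (E-1) ^ (s+γ)) + A * ((E-1) ^ s / s) := by
      rw [hgdef]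
      rw [integral_add (((intG E)).const_mul ε)
        ((IntegrableOn.integrable_indicator ((intgOnIoc hs (E-1)).const_mul A)
          measurableSet_Ioc).integrableOn)]
      congr 1
      · rw [integral_const_mul, hΦ]
      · rw [MeasureTheory.setIntegral_indicator measurableSet_Ioc,
          Set.inter_eq_self_of_subset_right Set.Ioc_subset_Ioi_self,
          integral_const_mul, intIoc hs (by linarith : (0:ℝ) ≤ E - 1)]
    -- put it together
    have hRdiff : |R E - L * (E-1) ^ (s+γ)|
        ≤ s * (ε * (Bγ * (E-1) ^ (s+γ)) + A * ((E-1) ^ s / s)) := by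
      rw [hpart1 E, hLdef]
      rw [show s * (∫ y in Ioi (0:ℝ), y ^ (s-1) * N (E - y))
            - s * (c0 * (W 0 * Bγ)) * (E-1) ^ (s+γ)
          = s * ((∫ y in Ioi (0:ℝ), y ^ (s-1) * N (E - y))
            - c0 * W 0 * (Bγ * (E-1) ^ (s+γ))) by ring]
      rw [abs_mul, abs_of_pos hs]
      apply mul_le_mul_of_nonneg_left _ hs.le
      rw [hsub, ← hgval, ← Real.norm_eq_abs]
      exact norm_integral_le_of_norm_le hgint hgbound
    -- conclude
    rw [Real.dist_eq]
    have hquot : R E / (E-1) ^ (s+γ) - L = (R E - L * (E-1) ^ (s+γ)) / (E-1) ^ (s+γ) := by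
      rw [sub_div, mul_div_assoc, div_self hbpos.ne', mul_one]
    rw [hquot, abs_div, abs_of_pos hbpos]
    have hstep : |R E - L * (E-1) ^ (s+γ)| / (E-1) ^ (s+γ)
        ≤ s * ε * Bγ + A * (E-1) ^ (-γ) := by
      rw [div_le_iff₀ hbpos]
      have hsplit : (E-1) ^ (-γ) * (E-1) ^ (s+γ) = (E-1) ^ s := by
        rw [← Real.rpow_add hb1]
        congr 1
        ring
      have e1 : s * (ε * (Bγ * (E-1) ^ (s+γ)) + A * ((E-1) ^ s / s))
          = s * ε * Bγ * (E-1) ^ (s+γ) + A * (E-1) ^ s := by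
        field_simp
      have e2 : (s * ε * Bγ + A * (E-1) ^ (-γ)) * (E-1) ^ (s+γ)
          = s * ε * Bγ * (E-1) ^ (s+γ) + A * (E-1) ^ s := by
        rw [add_mul, mul_assoc A, hsplit]
      rw [e2, ← e1]
      exact hRdiff
    have h2 : A * (E-1) ^ (-γ) < δ/2 := by
      have := hE₁ E (le_trans (le_max_right _ _) hE)
      rw [Real.dist_eq, sub_zero,
        abs_of_nonneg (mul_nonneg hAnn (Real.rpow_nonneg hb1.le _))] at this
      exact this
    have h3 : s * ε * Bγ ≤ δ/2 := by
      have hrw : s * ε * Bγ = (δ/2) * ((s*Bγ)/(s*Bγ+1)) := by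
        rw [hεdef]; field_simp
      rw [hrw]
      have h4 : (s*Bγ)/(s*Bγ+1) ≤ 1 := (div_le_one hsB1).mpr (by linarith)
      nlinarith [h4, hδ.le]
    calc |R E - L * (E-1) ^ (s+γ)| / (E-1) ^ (s+γ)
        ≤ s * ε * Bγ + A * (E-1) ^ (-γ) := hstep
      _ < δ/2 + δ/2 := by linarith
      _ = δ := by ring
  -- replace (E-1)^(s+γ) by E^(s+γ)
  have claim2 : Tendsto (fun E : ℝ => (E-1) ^ (s+γ) / E ^ (s+γ)) atTop (nhds 1) := by
    have h1 : Tendsto (fun E : ℝ => 1 - E⁻¹) atTop (nhds 1) := by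
      have h0 : Tendsto (fun E : ℝ => E⁻¹) atTop (nhds (0:ℝ)) := tendsto_inv_atTop_zero
      have := h0.const_sub 1
      simpa using this
    have h2 : Tendsto (fun E : ℝ => (1 - E⁻¹) ^ (s+γ)) atTop (nhds 1) := by
      have hc := (Real.continuousAt_rpow_const 1 (s+γ) (Or.inl one_ne_zero)).tendsto
      have := hc.comp h1
      simpa [Real.one_rpow, Function.comp_def] using this
    apply h2.congr'
    filter_upwards [eventually_ge_atTop (2:ℝ)] with E hE
    have hE0 : (0:ℝ) < E := by linarith
    rw [show (1 - E⁻¹) = (E-1)/E by field_simp, Real.div_rpow (by linarith) hE0.le]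
  have claim3 : Tendsto (fun E => R E / E ^ (s+γ)) atTop (nhds L) := by
    have := claim1.mul claim2
    rw [mul_one] at this
    apply this.congr'
    filter_upwards [eventually_ge_atTop (2:ℝ)] with E hE
    have hb : (E-1) ^ (s+γ) ≠ 0 := (Real.rpow_pos_of_pos (by linarith) _).ne'
    rw [div_mul_div_comm, mul_comm (R E) ((E-1) ^ (s+γ)), mul_div_mul_left _ _ hb]
  -- final assembly
  have hfin : Tendsto (fun E => R E / E ^ (s+γ)
      / (Gamma (s+1) / ((4*π) ^ ((d:ℝ)/2) * Gamma (s+1+(d:ℝ)/2)) * W s)) atTop (nhds 1) := by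
    have := claim3.div_const (Gamma (s+1) / ((4*π) ^ ((d:ℝ)/2) * Gamma (s+1+(d:ℝ)/2)) * W s)
    rw [hconst] at this
    rwa [div_self (mul_pos hCpos hWspos).ne'] at this
  apply hfin.congr
  intro E
  rw [div_div]
  congr 1
  ring

/-- Riesz means of `H = -Δ + V`, `V(x) = 1 + |x|^θ`: the layer-cake identity
`R_s(E) = Tr(|E-H|₊^s) = s ∫₀^∞ y^{s-1} N(E-y) dy` holds, and, assuming the Weyl asymptotics
`N(E)/((E-1)^{(1+2/θ)d/2} W_0(1)) → (4π)^{-d/2}/Γ(1+d/2)` for the eigenvalue counting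
function as input, one gets `R_s(E)/(C_{s,d} E^{s+(1+2/θ)d/2} W_s(1)) → 1` as `E → ∞`,
with `C_{s,d} = Γ(s+1)/((4π)^{d/2}Γ(s+1+d/2))` and `W_s(1) = ∫ |1-|x|^θ|₊^{s+d/2} dx`. -/
theorem stmt19 (d : ℕ) (hd : 0 < d) (θ s : ℝ) (hθ : 0 < θ) (hs : 0 < s)
    (lam : ℕ → ℝ) (hlam : Monotone lam) (hlam1 : ∀ j, 1 ≤ lam j)
    (hlamtop : Tendsto lam atTop atTop)
    (N : ℝ → ℝ)
    (hN : ∀ E, N E = ∑' j, Set.indicator {j : ℕ | lam j ≤ E} (fun _ => (1:ℝ)) j)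
    (R : ℝ → ℝ) (hR : ∀ E, R E = ∑' j, (max (E - lam j) 0) ^ s)
    (W : ℝ → ℝ)
    (hW : ∀ t : ℝ, W t = ∫ x : EuclideanSpace ℝ (Fin d), (max (1 - ‖x‖ ^ θ) 0) ^ (t + (d:ℝ)/2))
    (hWeyl : Tendsto (fun E => N E / ((E - 1) ^ ((1 + 2/θ) * ((d:ℝ)/2)) * W 0)) atTop
      (nhds (1 / ((4 * π) ^ ((d:ℝ)/2) * Gamma (1 + (d:ℝ)/2))))) :
    (∀ E : ℝ, R E = s * ∫ y in Set.Ioi (0:ℝ), y ^ (s - 1) * N (E - y)) ∧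
    Tendsto (fun E => R E / (Gamma (s+1) / ((4*π) ^ ((d:ℝ)/2) * Gamma (s+1+(d:ℝ)/2))
        * E ^ (s + (1 + 2/θ) * ((d:ℝ)/2)) * W s)) atTop (nhds 1) := by
  classical
  have hpart1 := stmt19part1 d hd θ s hθ hs lam hlam hlam1 hlamtop N hN R hR
  have hex : ∀ E : ℝ, ∃ n, E < lam n := fun E => (hlamtop.eventually_gt_atTop E).exists
  have hm_gt : ∀ E j, Nat.find (hex E) ≤ j → E < lam j :=
    fun E j hj => lt_of_lt_of_le (Nat.find_spec (hex E)) (hlam hj)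
  have hm_le : ∀ E j, j < Nat.find (hex E) → lam j ≤ E :=
    fun E j hj => not_lt.mp (Nat.find_min (hex E) hj)
  have hNm : ∀ E, N E = (Nat.find (hex E) : ℝ) := by
    intro E
    rw [hN E, tsum_eq_sum (s := Finset.range (Nat.find (hex E)))
      (fun j hj => Set.indicator_of_notMem (by
        simp only [mem_setOf_eq, not_le]
        exact hm_gt E j (not_lt.mp (Finset.mem_range.not.mp hj))) _)]
    rw [Finset.sum_congr rfl (fun j hj => Set.indicator_of_mem
      (by exact hm_le E j (Finset.mem_range.mp hj) : j ∈ {j : ℕ | lam j ≤ E}) _)]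
    simp
  have hNmono : Monotone N := by
    intro a b hab
    rw [hNm a, hNm b, Nat.cast_le]
    exact Nat.find_mono (fun n hn => lt_of_le_of_lt hab hn)
  have hNnn : ∀ E, 0 ≤ N E := fun E => by rw [hNm E]; positivity
  have hN0 : ∀ E, E < 1 → N E = 0 := by
    intro E hE
    rw [hNm E]
    norm_cast
    rw [Nat.find_eq_zero]
    exact lt_of_lt_of_le hE (hlam1 0)
  exact ⟨hpart1, stmt19part2 d hd θ s hθ hs N R W hNmono hNnn hN0 hpart1 hW hWeyl⟩
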